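/- arXiv:2504.18897 — 2 statements merged into one kernel-verified Lean document; each statement's English description precedes it below -/
import Mathlib

section
/- Let P and Q be probability measures on the closed unit ball of R^d such that for every c in the unit sphere S^{d-1} and every mu in [-1,1], the expectation of max(c^T x + mu, 0) under P equals that under Q. Then for every c in S^{d-1} and every t in R, P(c^T X <= t) = Q(c^T Y <= t), where X ~ P and Y ~ Q. -/
open MeasureTheory Filter
open scoped RealInnerProductSpace Topology


lemma aux_max_le (a h : ℝ) (hh : 0 ≤ h) :
    max a 0 - max (a - h) 0 ≤ if 0 < a then h else 0 := by
  split_ifs with hb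
  · have h1 : max a 0 = a := max_eq_left hb.le
    have h2 : a - h ≤ max (a - h) 0 := le_max_left _ _
    linarith
  · have h1 : max a 0 = 0 := max_eq_right (not_lt.mp hb)
    have h2 : (0:ℝ) ≤ max (a - h) 0 := le_max_right _ _
    linarith

lemma aux_le_max (a h : ℝ) (hh : 0 ≤ h) :
    (if h ≤ a then h else 0) ≤ max a 0 - max (a - h) 0 := by
  split_ifs with hb
  · have h1 : max a 0 = a := max_eq_left (le_trans hh hb)
    have h2 : max (a - h) 0 = a - h := max_eq_left (by linarith)
    linarith
  · have h2 : max (a - h) 0 ≤ max a 0 := max_le_max (by linarith) le_rfl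
    linarith

section
variable {d : ℕ}

lemma aux_meas (c : EuclideanSpace ℝ (Fin d)) : Measurable fun x : EuclideanSpace ℝ (Fin d) => ⟪c, x⟫ :=
  (innerSL ℝ c).continuous.measurable

lemma aux_int (P : Measure (EuclideanSpace ℝ (Fin d))) [IsProbabilityMeasure P]
    (hP : ∀ᵐ x ∂P, ‖x‖ ≤ 1) (c : EuclideanSpace ℝ (Fin d)) (μ : ℝ) :
    Integrable (fun x => max (⟪c, x⟫ + μ) 0) P := by
  refine Integrable.mono' (integrable_const (‖c‖ + |μ|))
    (((aux_meas c).add_const μ).max measurable_const).aestronglyMeasurable ?_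
  filter_upwards [hP] with x hx
  have h1 : |⟪c, x⟫| ≤ ‖c‖ := by
    have := abs_real_inner_le_norm c x
    nlinarith [norm_nonneg c]
  rw [Real.norm_eq_abs, abs_le]
  constructor
  · have : (0:ℝ) ≤ max (⟪c,x⟫ + μ) 0 := le_max_right _ _
    have : (0:ℝ) ≤ ‖c‖ + |μ| := by positivity
    linarith [le_max_right (⟪c,x⟫ + μ) (0:ℝ)]
  · have := abs_le.mp h1
    rcases le_or_gt (⟪c,x⟫ + μ) 0 with hc | hc
    · rw [max_eq_right hc]; positivity
    · rw [max_eq_left hc.le]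
      have := neg_abs_le μ
      have := le_abs_self μ
      linarith [this]

end

section
variable {d : ℕ}

lemma aux_key (P : Measure (EuclideanSpace ℝ (Fin d))) [IsProbabilityMeasure P]
    (hP : ∀ᵐ x ∂P, ‖x‖ ≤ 1) (c : EuclideanSpace ℝ (Fin d)) (t : ℝ) :
    Tendsto (fun n : ℕ => (n : ℝ) *
        ((∫ x, max (⟪c, x⟫ + (-t)) 0 ∂P) - ∫ x, max (⟪c, x⟫ + (-t - 1/(n:ℝ))) 0 ∂P)) atTop
      (𝓝 (P {x | t < ⟪c, x⟫}).toReal) := by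
  set S : Set (EuclideanSpace ℝ (Fin d)) := {x | t < ⟪c, x⟫} with hS
  have hSmeas : MeasurableSet S := measurableSet_lt measurable_const (aux_meas c)
  -- lower sequence tends to the limit
  set L : ℕ → ℝ := fun n => (P {x | t + 1/(n:ℝ) ≤ ⟪c, x⟫}).toReal with hL
  have hLtend : Tendsto L atTop (𝓝 (P S).toReal) := by
    rw [← tendsto_add_atTop_iff_nat 1]
    set A : ℕ → Set (EuclideanSpace ℝ (Fin d)) := fun n => {x | t + 1/((n:ℝ)+1) ≤ ⟪c, x⟫} with hA
    have hmono : Monotone A := by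
      intro n m hnm x hx
      simp only [hA, Set.mem_setOf_eq] at hx ⊢
      have : 1/((m:ℝ)+1) ≤ 1/((n:ℝ)+1) := by
        apply one_div_le_one_div_of_le (by positivity)
        have : (n:ℝ) ≤ m := by exact_mod_cast hnm
        linarith
      linarith
    have hUnion : ⋃ n, A n = S := by
      ext x
      simp only [hA, hS, Set.mem_iUnion, Set.mem_setOf_eq]
      constructor
      · rintro ⟨n, hn⟩
        have : (0:ℝ) < 1/((n:ℝ)+1) := by positivity
        linarith
      · intro hx
        obtain ⟨n, hn⟩ := exists_nat_one_div_lt (show (0:ℝ) < ⟪c,x⟫ - t by linarith)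
        exact ⟨n, by linarith⟩
    have h1 : Tendsto (P ∘ A) atTop (𝓝 (P S)) := by
      have := tendsto_measure_iUnion_atTop (μ := P) hmono
      rwa [hUnion] at this
    have h2 := (ENNReal.tendsto_toReal (measure_ne_top P S)).comp h1
    apply h2.congr
    intro n
    simp only [Function.comp_apply, hL, hA]
    congr 2
    push_cast
    ring_nf
  refine tendsto_of_tendsto_of_tendsto_of_le_of_le' hLtend tendsto_const_nhds ?_ ?_
  · -- lower bound
    filter_upwards [eventually_ge_atTop 1] with n hn
    have hnpos : (0:ℝ) < n := by exact_mod_cast hn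
    set h : ℝ := 1/(n:ℝ) with hh
    have hhpos : 0 < h := by positivity
    set T : Set (EuclideanSpace ℝ (Fin d)) := {x | t + h ≤ ⟪c, x⟫} with hT
    have hTmeas : MeasurableSet T := measurableSet_le measurable_const (aux_meas c)
    have hint1 := aux_int P hP c (-t)
    have hint2 := aux_int P hP c (-t - h)
    have hsub := (integral_sub hint1 hint2).symm
    have hptwise : ∀ x, Set.indicator T (fun _ => h) x ≤
        max (⟪c,x⟫ + (-t)) 0 - max (⟪c,x⟫ + (-t - h)) 0 := by
      intro x
      have key := aux_le_max (⟪c,x⟫ - t) h hhpos.le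
      have e1 : ⟪c,x⟫ + (-t) = ⟪c,x⟫ - t := by ring
      have e2 : ⟪c,x⟫ + (-t - h) = ⟪c,x⟫ - t - h := by ring
      rw [e1, e2, Set.indicator_apply]
      by_cases hx : x ∈ T
      · rw [if_pos hx]
        rwa [if_pos (by simp only [hT, Set.mem_setOf_eq] at hx; linarith)] at key
      · rw [if_neg hx]
        rwa [if_neg (by simp only [hT, Set.mem_setOf_eq] at hx; intro hcon; exact hx (by linarith))] at key
    have hImono : ∫ x, Set.indicator T (fun _ => h) x ∂P ≤
        ∫ x, (max (⟪c,x⟫ + (-t)) 0 - max (⟪c,x⟫ + (-t - h)) 0) ∂P :=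
      integral_mono ((integrable_const h).indicator hTmeas) (hint1.sub hint2) hptwise
    rw [integral_indicator_const _ hTmeas] at hImono
    have : (P T).toReal * h ≤
        (∫ x, max (⟪c,x⟫ + (-t)) 0 ∂P) - ∫ x, max (⟪c,x⟫ + (-t - h)) 0 ∂P := by
      rw [hsub]; simpa [smul_eq_mul, measureReal_def] using hImono
    have hLn : L n = (P T).toReal := rfl
    rw [hLn]
    calc (P T).toReal = (n:ℝ) * ((P T).toReal * h) := by
          rw [hh]; field_simp
      _ ≤ _ := by
          apply mul_le_mul_of_nonneg_left _ hnpos.le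
          exact this
  · -- upper bound
    filter_upwards [eventually_ge_atTop 1] with n hn
    have hnpos : (0:ℝ) < n := by exact_mod_cast hn
    set h : ℝ := 1/(n:ℝ) with hh
    have hhpos : 0 < h := by positivity
    have hint1 := aux_int P hP c (-t)
    have hint2 := aux_int P hP c (-t - h)
    have hsub := (integral_sub hint1 hint2).symm
    have hptwise : ∀ x, max (⟪c,x⟫ + (-t)) 0 - max (⟪c,x⟫ + (-t - h)) 0 ≤
        Set.indicator S (fun _ => h) x := by
      intro x
      have key := aux_max_le (⟪c,x⟫ - t) h hhpos.le
      have e1 : ⟪c,x⟫ + (-t) = ⟪c,x⟫ - t := by ring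
      have e2 : ⟪c,x⟫ + (-t - h) = ⟪c,x⟫ - t - h := by ring
      rw [e1, e2, Set.indicator_apply]
      by_cases hx : x ∈ S
      · rw [if_pos hx]
        rwa [if_pos (by simp only [hS, Set.mem_setOf_eq] at hx; linarith)] at key
      · rw [if_neg hx]
        rwa [if_neg (by simp only [hS, Set.mem_setOf_eq] at hx; intro hcon; exact hx (by linarith))] at key
    have hImono : ∫ x, (max (⟪c,x⟫ + (-t)) 0 - max (⟪c,x⟫ + (-t - h)) 0) ∂P ≤
        ∫ x, Set.indicator S (fun _ => h) x ∂P :=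
      integral_mono (hint1.sub hint2) ((integrable_const h).indicator hSmeas) hptwise
    rw [integral_indicator_const _ hSmeas] at hImono
    have : (∫ x, max (⟪c,x⟫ + (-t)) 0 ∂P) - ∫ x, max (⟪c,x⟫ + (-t - h)) 0 ∂P ≤
        (P S).toReal * h := by
      rw [hsub]; simpa [smul_eq_mul, measureReal_def] using hImono
    calc (n:ℝ) * ((∫ x, max (⟪c,x⟫ + (-t)) 0 ∂P) - ∫ x, max (⟪c,x⟫ + (-t - h)) 0 ∂P)
        ≤ (n:ℝ) * ((P S).toReal * h) := mul_le_mul_of_nonneg_left this hnpos.le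
      _ = (P S).toReal := by rw [hh]; field_simp

end

theorem stmt_2 (d : ℕ) (P Q : Measure (EuclideanSpace ℝ (Fin d)))
    [IsProbabilityMeasure P] [IsProbabilityMeasure Q]
    (hP : P (Metric.closedBall 0 1)ᶜ = 0) (hQ : Q (Metric.closedBall 0 1)ᶜ = 0)
    (h : ∀ c : EuclideanSpace ℝ (Fin d), ‖c‖ = 1 → ∀ μ ∈ Set.Icc (-1 : ℝ) 1,
      ∫ x, max (⟪c, x⟫ + μ) 0 ∂P = ∫ x, max (⟪c, x⟫ + μ) 0 ∂Q) :
    ∀ c : EuclideanSpace ℝ (Fin d), ‖c‖ = 1 → ∀ t : ℝ,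
      P {x | ⟪c, x⟫ ≤ t} = Q {x | ⟪c, x⟫ ≤ t} := by
  have hball : ∀ (R : Measure (EuclideanSpace ℝ (Fin d))), R (Metric.closedBall 0 1)ᶜ = 0 →
      ∀ᵐ x ∂ R, ‖x‖ ≤ 1 := by
    intro R hR
    rw [ae_iff]
    convert hR using 2
    ext x
    simp [Metric.mem_closedBall, dist_zero_right]
  have hPae := hball P hP
  have hQae := hball Q hQ
  intro c hc t
  -- inner products are bounded by 1 for points in the ball
  have hinner : ∀ x : EuclideanSpace ℝ (Fin d), ‖x‖ ≤ 1 → |⟪c, x⟫| ≤ 1 := by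
    intro x hx
    calc |⟪c, x⟫| ≤ ‖c‖ * ‖x‖ := abs_real_inner_le_norm c x
      _ ≤ 1 := by rw [hc]; linarith
  -- step 1: equality of tail probabilities on (-1, 1)
  have hopen : ∀ u : ℝ, u ∈ Set.Ioo (-1:ℝ) 1 →
      P {x | u < ⟪c, x⟫} = Q {x | u < ⟪c, x⟫} := by
    intro u hu
    obtain ⟨hu1, hu2⟩ := hu
    have kP := aux_key P hPae c u
    have kQ := aux_key Q hQae c u
    obtain ⟨N, hN⟩ := exists_nat_one_div_lt (show (0:ℝ) < 1 - u by linarith)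
    have heq : ∀ᶠ n : ℕ in atTop, (n : ℝ) *
        ((∫ x, max (⟪c, x⟫ + (-u)) 0 ∂P) - ∫ x, max (⟪c, x⟫ + (-u - 1/(n:ℝ))) 0 ∂P) =
        (n : ℝ) *
        ((∫ x, max (⟪c, x⟫ + (-u)) 0 ∂Q) - ∫ x, max (⟪c, x⟫ + (-u - 1/(n:ℝ))) 0 ∂Q) := by
      filter_upwards [eventually_ge_atTop (N+1)] with n hn
      have hnpos : (0:ℝ) < n := by
        have : (N+1 : ℕ) ≤ n := hn
        have : ((N:ℝ)+1) ≤ n := by exact_mod_cast this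
        linarith
      have hdiv : 1/(n:ℝ) ≤ 1/((N:ℝ)+1) := by
        apply one_div_le_one_div_of_le (by positivity)
        exact_mod_cast hn
      have h1 := h c hc (-u) ⟨by linarith, by linarith⟩
      have h2 := h c hc (-u - 1/(n:ℝ)) ⟨by linarith, by
        have : (0:ℝ) ≤ 1/(n:ℝ) := by positivity
        linarith⟩
      rw [h1, h2]
    have := tendsto_nhds_unique (kP.congr' heq) kQ
    exact (ENNReal.toReal_eq_toReal_iff' (measure_ne_top P _) (measure_ne_top Q _)).mp this
  -- step 2: equality of CDFs on (-1, 1)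
  have hcompl : ∀ (R : Measure (EuclideanSpace ℝ (Fin d))) [IsProbabilityMeasure R], ∀ u : ℝ,
      R {x | ⟪c, x⟫ ≤ u} = 1 - R {x | u < ⟪c, x⟫} := by
    intro R _ u
    have hset : {x : EuclideanSpace ℝ (Fin d) | ⟪c, x⟫ ≤ u} = {x | u < ⟪c, x⟫}ᶜ := by
      ext x; simp [not_lt]
    rw [hset, measure_compl (measurableSet_lt measurable_const (aux_meas c))
      (measure_ne_top _ _), measure_univ]
  have hcdf : ∀ u : ℝ, u ∈ Set.Ioo (-1:ℝ) 1 →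
      P {x | ⟪c, x⟫ ≤ u} = Q {x | ⟪c, x⟫ ≤ u} := by
    intro u hu
    rw [hcompl P u, hcompl Q u, hopen u hu]
  rcases lt_or_ge t (-1) with ht | ht
  · -- t < -1: both measures vanish
    have hzero : ∀ (R : Measure (EuclideanSpace ℝ (Fin d))),
        R (Metric.closedBall 0 1)ᶜ = 0 → R {x | ⟪c, x⟫ ≤ t} = 0 := by
      intro R hR
      refine measure_mono_null ?_ hR
      intro x hx
      simp only [Set.mem_setOf_eq] at hx
      simp only [Set.mem_compl_iff, Metric.mem_closedBall, dist_zero_right, not_le]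
      by_contra hcon
      push_neg at hcon
      have := hinner x hcon
      have := neg_abs_le ⟪c, x⟫
      linarith
    rw [hzero P hP, hzero Q hQ]
  rcases lt_or_ge t 1 with ht1 | ht1
  · -- t ∈ [-1, 1): approximate from the right
    set u : ℕ → ℝ := fun n => t + (1 - t)/((n:ℝ) + 2) with hu
    have hu_mem : ∀ n, u n ∈ Set.Ioo (-1:ℝ) 1 := by
      intro n
      have hpos : (0:ℝ) < (1 - t)/((n:ℝ) + 2) := by
        apply div_pos (by linarith) (by positivity)
      have hlt : (1 - t)/((n:ℝ) + 2) < 1 - t := by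
        rw [div_lt_iff₀ (by positivity : (0:ℝ) < (n:ℝ)+2)]
        nlinarith
      constructor
      · simp only [hu]; linarith
      · simp only [hu]; linarith
    have hu_tendsto : Tendsto u atTop (𝓝 t) := by
      have h2 : Tendsto (fun n : ℕ => ((n:ℝ) + 2)) atTop atTop :=
        tendsto_atTop_add_const_right _ 2 tendsto_natCast_atTop_atTop
      have h3 : Tendsto (fun n : ℕ => ((n:ℝ) + 2)⁻¹) atTop (𝓝 0) := h2.inv_tendsto_atTop
      have h4 : Tendsto (fun n : ℕ => (1 - t) * ((n:ℝ) + 2)⁻¹) atTop (𝓝 ((1-t) * 0)) :=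
        h3.const_mul _
      rw [mul_zero] at h4
      have h5 : Tendsto (fun n : ℕ => t + (1 - t) * ((n:ℝ) + 2)⁻¹) atTop (𝓝 (t + 0)) :=
        h4.const_add t
      rw [add_zero] at h5
      apply h5.congr
      intro n
      simp only [hu]
      ring
    set C : ℕ → Set (EuclideanSpace ℝ (Fin d)) := fun n => {x | ⟪c, x⟫ ≤ u n} with hC
    have hCmeas : ∀ n, NullMeasurableSet (C n) (μ := P) := fun n =>
      (measurableSet_le (aux_meas c) measurable_const).nullMeasurableSet
    have hCmeasQ : ∀ n, NullMeasurableSet (C n) (μ := Q) := fun n =>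
      (measurableSet_le (aux_meas c) measurable_const).nullMeasurableSet
    have hanti : Antitone C := by
      intro n m hnm x hx
      simp only [hC, Set.mem_setOf_eq] at hx ⊢
      have : u m ≤ u n := by
        have h1 : ((n:ℝ)+2) ≤ ((m:ℝ)+2) := by
          have : (n:ℝ) ≤ m := by exact_mod_cast hnm
          linarith
        have h2 : (1-t)/((m:ℝ)+2) ≤ (1-t)/((n:ℝ)+2) :=
          div_le_div_of_nonneg_left (show (0:ℝ) ≤ 1 - t by linarith) (by positivity) h1
        simp only [hu]
        linarith
      linarith
    have hinter : ⋂ n, C n = {x | ⟪c, x⟫ ≤ t} := by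
      ext x
      simp only [hC, Set.mem_iInter, Set.mem_setOf_eq]
      constructor
      · intro hx
        exact ge_of_tendsto hu_tendsto (Filter.Eventually.of_forall hx)
      · intro hx n
        have := (hu_mem n).1
        have hpos : t ≤ u n := by
          simp only [hu]
          have : (0:ℝ) ≤ (1 - t)/((n:ℝ) + 2) := by
            apply div_nonneg (by linarith) (by positivity)
          linarith
        linarith
    have hPt : Tendsto (P ∘ C) atTop (𝓝 (P {x | ⟪c, x⟫ ≤ t})) := by
      have := tendsto_measure_iInter_atTop hCmeas hanti ⟨0, measure_ne_top _ _⟩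
      rwa [hinter] at this
    have hQt : Tendsto (Q ∘ C) atTop (𝓝 (Q {x | ⟪c, x⟫ ≤ t})) := by
      have := tendsto_measure_iInter_atTop hCmeasQ hanti ⟨0, measure_ne_top _ _⟩
      rwa [hinter] at this
    have heq : (P ∘ C) = (Q ∘ C) := by
      funext n
      exact hcdf (u n) (hu_mem n)
    rw [heq] at hPt
    exact tendsto_nhds_unique hPt hQt
  · -- t ≥ 1: both measures are 1
    have hone : ∀ (R : Measure (EuclideanSpace ℝ (Fin d))) [IsProbabilityMeasure R],
        R (Metric.closedBall 0 1)ᶜ = 0 → R {x | ⟪c, x⟫ ≤ t} = 1 := by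
      intro R _ hR
      have hcmp : R {x | ⟪c, x⟫ ≤ t}ᶜ = 0 := by
        refine measure_mono_null ?_ hR
        intro x hx
        simp only [Set.mem_compl_iff, Set.mem_setOf_eq, not_le] at hx
        simp only [Set.mem_compl_iff, Metric.mem_closedBall, dist_zero_right, not_le]
        by_contra hcon
        push_neg at hcon
        have := hinner x hcon
        have := le_abs_self ⟪c, x⟫
        linarith
      have := measure_add_measure_compl (μ := R) (s := {x | ⟪c, x⟫ ≤ t})
        (measurableSet_le (aux_meas c) measurable_const)
      rw [hcmp, add_zero, measure_univ] at this
      exact this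
    rw [hone P hP, hone Q hQ]
end

section
/- Let P and Q be probability measures on the closed unit ball of R^d. The ReLU-IPM d(P,Q) = sup over c in the unit sphere and mu in [-1,1] of |E_P[max(c^T X + mu, 0)] - E_Q[max(c^T Y + mu, 0)]| equals zero if and only if P = Q. -/
open MeasureTheory Set Real
open scoped RealInnerProductSpace NNReal

section Aux
lemma key1d (g g' g'' : ℝ → ℝ) (hg : ∀ t, HasDerivAt g (g' t) t)
    (hg' : ∀ t, HasDerivAt g' (g'' t) t) (hg'' : Continuous g'')
    {s : ℝ} (hs : s ∈ Icc (-1:ℝ) 1) :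
    g s = g (-1) + g' (-1) * (s + 1) + ∫ t in Ioc (-1:ℝ) 1, g'' t * max (s - t) 0 := by
  have hgc' : Continuous g' :=
    continuous_iff_continuousAt.2 fun t => (hg' t).differentiableAt.continuousAt
  have hcont : Continuous fun t => g'' t * max (s - t) 0 :=
    hg''.mul ((continuous_const.sub continuous_id).max continuous_const)
  have hIoc : (∫ t in Ioc (-1:ℝ) 1, g'' t * max (s - t) 0) =
      ∫ t in (-1:ℝ)..1, g'' t * max (s - t) 0 :=
    (intervalIntegral.integral_of_le (by norm_num)).symm
  have hsplit : (∫ t in (-1:ℝ)..s, g'' t * max (s - t) 0)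
      + ∫ t in s..(1:ℝ), g'' t * max (s - t) 0 = ∫ t in (-1:ℝ)..1, g'' t * max (s - t) 0 :=
    intervalIntegral.integral_add_adjacent_intervals (hcont.intervalIntegrable _ _)
      (hcont.intervalIntegrable _ _)
  have h2 : (∫ t in s..(1:ℝ), g'' t * max (s - t) 0) = 0 := by
    rw [intervalIntegral.integral_congr (g := fun _ => (0:ℝ)) ?_, intervalIntegral.integral_zero]
    intro t ht
    rw [uIcc_of_le hs.2] at ht
    simp [max_eq_right (by linarith [ht.1] : s - t ≤ 0)]
  have h1 : (∫ t in (-1:ℝ)..s, g'' t * max (s - t) 0) = ∫ t in (-1:ℝ)..s, g'' t * (s - t) := by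
    apply intervalIntegral.integral_congr
    intro t ht
    rw [uIcc_of_le hs.1] at ht
    simp [max_eq_left (by linarith [ht.2] : (0:ℝ) ≤ s - t)]
  have hparts : (∫ t in (-1:ℝ)..s, (g'' t * (s - t) + g' t * (-1)))
      = g' s * (s - s) - g' (-1) * (s - (-1)) := by
    apply intervalIntegral.integral_deriv_mul_eq_sub (u := g') (v := fun t => s - t)
      (u' := g'') (v' := fun _ => (-1:ℝ))
    · exact fun x _ => hg' x
    · exact fun x _ => (hasDerivAt_id x).const_sub s
    · exact hg''.intervalIntegrable _ _
    · exact intervalIntegrable_const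
  have hadd : (∫ t in (-1:ℝ)..s, (g'' t * (s - t) + g' t * (-1)))
      = (∫ t in (-1:ℝ)..s, g'' t * (s - t)) + ∫ t in (-1:ℝ)..s, g' t * (-1) :=
    intervalIntegral.integral_add ((hg''.mul (continuous_const.sub continuous_id)).intervalIntegrable _ _)
      ((hgc'.mul continuous_const).intervalIntegrable _ _)
  have hftc : (∫ t in (-1:ℝ)..s, g' t) = g s - g (-1) :=
    intervalIntegral.integral_eq_sub_of_hasDerivAt (fun t _ => hg t)
      (hgc'.intervalIntegrable _ _)
  have hneg : (∫ t in (-1:ℝ)..s, g' t * (-1)) = -(g s - g (-1)) := by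
    simp only [mul_neg_one]
    rw [intervalIntegral.integral_neg, hftc]
  rw [hIoc, ← hsplit, h2, h1]
  have := hparts
  rw [hadd, hneg] at this
  linarith

variable {d : ℕ}

lemma repr_lemma (P : Measure (EuclideanSpace ℝ (Fin d))) [IsProbabilityMeasure P]
    (hP : ∀ᵐ x ∂P, ‖x‖ ≤ 1) (c : EuclideanSpace ℝ (Fin d)) (hc : ‖c‖ = 1)
    (g g' g'' : ℝ → ℝ) (hg : ∀ t, HasDerivAt g (g' t) t)
    (hg' : ∀ t, HasDerivAt g' (g'' t) t) (hg'' : Continuous g'')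
    (C : ℝ) (hC : ∀ t, |g'' t| ≤ C) :
    ∫ x, g ⟪c, x⟫ ∂P = g (-1) + g' (-1) * (∫ x, max (⟪c, x⟫ + 1) 0 ∂P)
      + ∫ t in Ioc (-1:ℝ) 1, g'' t * ∫ x, max (⟪c, x⟫ + (-t)) 0 ∂P := by
  have hC0 : 0 ≤ C := le_trans (abs_nonneg _) (hC 0)
  have hinner : Continuous fun x : EuclideanSpace ℝ (Fin d) => ⟪c, x⟫ :=
    Continuous.inner continuous_const continuous_id
  have hball : ∀ᵐ x ∂P, ⟪c, x⟫ ∈ Icc (-1:ℝ) 1 := by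
    filter_upwards [hP] with x hx
    have := abs_real_inner_le_norm c x
    rw [hc, one_mul] at this
    constructor <;> [linarith [abs_le.1 (this.trans hx)]; linarith [(abs_le.1 (this.trans hx)).2]]
  set ν : Measure ℝ := volume.restrict (Ioc (-1:ℝ) 1) with hν
  -- integrability of (x,t) ↦ g'' t * max(⟪c,x⟫ - t, 0) on product
  set F : EuclideanSpace ℝ (Fin d) × ℝ → ℝ := fun p => g'' p.2 * max (⟪c, p.1⟫ - p.2) 0 with hF
  have hFc : Continuous F := by
    apply hg''.comp continuous_snd |>.mul
    exact ((hinner.comp continuous_fst).sub continuous_snd).max continuous_const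
  have haeprod : ∀ᵐ p ∂(P.prod ν), ‖p.1‖ ≤ 1 ∧ p.2 ∈ Ioc (-1:ℝ) 1 := by
    have h1 : ∀ᵐ p : EuclideanSpace ℝ (Fin d) × ℝ ∂(P.prod ν), ‖p.1‖ ≤ 1 := by
      rw [ae_iff]
      have : {p : EuclideanSpace ℝ (Fin d) × ℝ | ¬ ‖p.1‖ ≤ 1}
          = {x | ¬ ‖x‖ ≤ 1} ×ˢ (univ : Set ℝ) := by ext p; simp
      rw [this, Measure.prod_prod]
      have h0 : P {x | ¬ ‖x‖ ≤ 1} = 0 := by rw [← ae_iff]; exact hP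
      rw [h0, zero_mul]
    have h2 : ∀ᵐ p : EuclideanSpace ℝ (Fin d) × ℝ ∂(P.prod ν), p.2 ∈ Ioc (-1:ℝ) 1 := by
      rw [ae_iff]
      have : {p : EuclideanSpace ℝ (Fin d) × ℝ | ¬ p.2 ∈ Ioc (-1:ℝ) 1}
          = (univ : Set (EuclideanSpace ℝ (Fin d))) ×ˢ {t | ¬ t ∈ Ioc (-1:ℝ) 1} := by ext p; simp
      rw [this, Measure.prod_prod]
      have h0 : ν {t | ¬ t ∈ Ioc (-1:ℝ) 1} = 0 := by
        rw [← ae_iff]; exact ae_restrict_mem measurableSet_Ioc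
      rw [h0, mul_zero]
    exact h1.and h2
  have hFi : Integrable F (P.prod ν) := by
    apply Integrable.mono' (integrable_const (C * 2)) hFc.aestronglyMeasurable
    filter_upwards [haeprod] with p hp
    have hi : |⟪c, p.1⟫| ≤ 1 := by
      have := abs_real_inner_le_norm c p.1
      rw [hc, one_mul] at this
      exact this.trans hp.1
    have h1 : |max (⟪c, p.1⟫ - p.2) 0| ≤ 2 := by
      rw [abs_le]
      constructor
      · linarith [le_max_right (⟪c, p.1⟫ - p.2) 0]
      · have : ⟪c, p.1⟫ - p.2 ≤ 2 := by
          have := abs_le.1 hi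
          have := hp.2.1
          linarith
        exact max_le this (by norm_num)
    calc ‖F p‖ = |g'' p.2| * |max (⟪c, p.1⟫ - p.2) 0| := by rw [hF]; exact abs_mul _ _
    _ ≤ C * 2 := mul_le_mul (hC _) h1 (abs_nonneg _) hC0
  -- a.e. pointwise identity
  have hae : ∀ᵐ x ∂P, g ⟪c, x⟫ = g (-1) + g' (-1) * max (⟪c, x⟫ + 1) 0
      + ∫ t, F (x, t) ∂ν := by
    filter_upwards [hball] with x hx
    have h0 : max (⟪c, x⟫ + 1) 0 = ⟪c, x⟫ + 1 := max_eq_left (by linarith [hx.1])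
    have := key1d g g' g'' hg hg' hg'' hx
    rw [h0]
    convert this using 3
  have hint2 : Integrable (fun x : EuclideanSpace ℝ (Fin d) => g' (-1) * max (⟪c, x⟫ + 1) 0) P := by
    apply Integrable.mono' (integrable_const (|g' (-1)| * 2))
      (continuous_const.mul ((hinner.add continuous_const).max continuous_const)).aestronglyMeasurable
    filter_upwards [hball] with x hx
    simp only [Pi.mul_apply, Pi.add_apply, norm_mul]
    apply mul_le_mul le_rfl ?_ (norm_nonneg _) (abs_nonneg _)
    rw [Real.norm_eq_abs, abs_le]
    refine ⟨by linarith [le_max_right (⟪c, x⟫ + 1) 0], max_le (by linarith [hx.2]) (by norm_num)⟩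
  have hint3 : Integrable (fun x => ∫ t, F (x, t) ∂ν) P := hFi.integral_prod_left
  calc ∫ x, g ⟪c, x⟫ ∂P
      = ∫ x, (g (-1) + g' (-1) * max (⟪c, x⟫ + 1) 0 + ∫ t, F (x, t) ∂ν) ∂P :=
        integral_congr_ae hae
    _ = g (-1) + g' (-1) * (∫ x, max (⟪c, x⟫ + 1) 0 ∂P) + ∫ x, (∫ t, F (x, t) ∂ν) ∂P := by
        have ha : Integrable (fun x : EuclideanSpace ℝ (Fin d) =>
            g (-1) + g' (-1) * max (⟪c, x⟫ + 1) 0) P := by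
          exact (integrable_const _).add hint2
        rw [integral_add ha hint3, integral_add (integrable_const _) hint2,
          integral_const, integral_const_mul]
        simp
    _ = g (-1) + g' (-1) * (∫ x, max (⟪c, x⟫ + 1) 0 ∂P)
        + ∫ t in Ioc (-1:ℝ) 1, g'' t * ∫ x, max (⟪c, x⟫ + (-t)) 0 ∂P := by
        rw [integral_integral_swap hFi]
        congr 1
        apply integral_congr_ae
        filter_upwards [] with t
        simp only [hF, sub_eq_add_neg]
        rw [integral_const_mul]

lemma ridge_eq (P Q : Measure (EuclideanSpace ℝ (Fin d))) [IsProbabilityMeasure P]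
    [IsProbabilityMeasure Q]
    (hP : ∀ᵐ x ∂P, ‖x‖ ≤ 1) (hQ : ∀ᵐ x ∂Q, ‖x‖ ≤ 1)
    (c : EuclideanSpace ℝ (Fin d)) (hc : ‖c‖ = 1)
    (h : ∀ μ ∈ Icc (-1:ℝ) 1, ∫ x, max (⟪c, x⟫ + μ) 0 ∂P = ∫ x, max (⟪c, x⟫ + μ) 0 ∂Q)
    (g g' g'' : ℝ → ℝ) (hg : ∀ t, HasDerivAt g (g' t) t)
    (hg' : ∀ t, HasDerivAt g' (g'' t) t) (hg'' : Continuous g'')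
    (C : ℝ) (hC : ∀ t, |g'' t| ≤ C) :
    ∫ x, g ⟪c, x⟫ ∂P = ∫ x, g ⟪c, x⟫ ∂Q := by
  rw [repr_lemma P hP c hc g g' g'' hg hg' hg'' C hC,
    repr_lemma Q hQ c hc g g' g'' hg hg' hg'' C hC,
    h 1 (by norm_num)]
  congr 1
  apply setIntegral_congr_fun measurableSet_Ioc
  intro t ht
  dsimp only
  rw [h (-t) ⟨by linarith [ht.2], by linarith [ht.1]⟩]

set_option maxHeartbeats 1000000 in
lemma trig_eq (P Q : Measure (EuclideanSpace ℝ (Fin d))) [IsProbabilityMeasure P]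
    [IsProbabilityMeasure Q]
    (hP : ∀ᵐ x ∂P, ‖x‖ ≤ 1) (hQ : ∀ᵐ x ∂Q, ‖x‖ ≤ 1)
    (h : ∀ c : EuclideanSpace ℝ (Fin d), ‖c‖ = 1 →
      ∀ μ ∈ Icc (-1:ℝ) 1, ∫ x, max (⟪c, x⟫ + μ) 0 ∂P = ∫ x, max (⟪c, x⟫ + μ) 0 ∂Q)
    (a : EuclideanSpace ℝ (Fin d)) :
    (∫ x, Real.cos ⟪a, x⟫ ∂P = ∫ x, Real.cos ⟪a, x⟫ ∂Q) ∧
      (∫ x, Real.sin ⟪a, x⟫ ∂P = ∫ x, Real.sin ⟪a, x⟫ ∂Q) := by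
  rcases eq_or_ne a 0 with rfl | ha
  · constructor <;> simp [inner_zero_left]
  · set r := ‖a‖ with hr
    have hrpos : 0 < r := norm_pos_iff.2 ha
    set c := ‖a‖⁻¹ • a with hcdef
    have hc : ‖c‖ = 1 := norm_smul_inv_norm ha
    have hia : ∀ x : EuclideanSpace ℝ (Fin d), ⟪a, x⟫ = r * ⟪c, x⟫ := by
      intro x
      rw [hcdef, real_inner_smul_left]
      field_simp
      rfl
    have hlin : ∀ t : ℝ, HasDerivAt (fun s : ℝ => r * s) (r * 1) t :=
      fun t => (hasDerivAt_id t).const_mul r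
    constructor
    · have hres := ridge_eq P Q hP hQ c hc (h c hc)
        (fun s => Real.cos (r * s)) (fun s => -Real.sin (r * s) * (r * 1))
        (fun s => -(Real.cos (r * s) * (r * 1)) * (r * 1))
        (fun t => (hlin t).cos) (fun t => ((hlin t).sin).neg.mul_const (r * 1))
        (((Real.continuous_cos.comp (continuous_const.mul continuous_id)).mul
          continuous_const).neg.mul continuous_const) (r * r) ?_
      · simp only [hia]
        exact hres
      · intro t
        have h1 := Real.abs_cos_le_one (r * t)
        simp only [mul_one, abs_mul, abs_neg, abs_of_pos hrpos]
        nlinarith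
    · have hres := ridge_eq P Q hP hQ c hc (h c hc)
        (fun s => Real.sin (r * s)) (fun s => Real.cos (r * s) * (r * 1))
        (fun s => -Real.sin (r * s) * (r * 1) * (r * 1))
        (fun t => (hlin t).sin) (fun t => ((hlin t).cos).mul_const (r * 1))
        ((((Real.continuous_sin.comp (continuous_const.mul continuous_id)).neg.mul
          continuous_const).mul continuous_const)) (r * r) ?_
      · simp only [hia]
        exact hres
      · intro t
        have h1 := Real.abs_sin_le_one (r * t)
        simp only [mul_one, abs_mul, abs_neg, abs_of_pos hrpos]
        nlinarith

end Aux

section Trig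

variable (d : ℕ)

noncomputable instance : CompactSpace (Metric.closedBall (0 : EuclideanSpace ℝ (Fin d)) 1) :=
  isCompact_iff_compactSpace.mp (isCompact_closedBall 0 1)

noncomputable def cosF (a : EuclideanSpace ℝ (Fin d)) :
    C(Metric.closedBall (0 : EuclideanSpace ℝ (Fin d)) 1, ℝ) :=
  ⟨fun x => Real.cos ⟪a, (x : EuclideanSpace ℝ (Fin d))⟫,
    Real.continuous_cos.comp (Continuous.inner continuous_const continuous_subtype_val)⟩

noncomputable def sinF (a : EuclideanSpace ℝ (Fin d)) :
    C(Metric.closedBall (0 : EuclideanSpace ℝ (Fin d)) 1, ℝ) :=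
  ⟨fun x => Real.sin ⟪a, (x : EuclideanSpace ℝ (Fin d))⟫,
    Real.continuous_sin.comp (Continuous.inner continuous_const continuous_subtype_val)⟩

def trigSet : Set C(Metric.closedBall (0 : EuclideanSpace ℝ (Fin d)) 1, ℝ) :=
  Set.range (cosF d) ∪ Set.range (sinF d)

noncomputable def trigMod : Submodule ℝ C(Metric.closedBall (0 : EuclideanSpace ℝ (Fin d)) 1, ℝ) :=
  Submodule.span ℝ (trigSet d)

lemma one_mem_trigMod : (1 : C(Metric.closedBall (0 : EuclideanSpace ℝ (Fin d)) 1, ℝ)) ∈ trigMod d := by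
  apply Submodule.subset_span
  left
  refine ⟨0, ?_⟩
  ext x
  simp [cosF, inner_zero_left]

lemma coscos (a b : EuclideanSpace ℝ (Fin d)) :
    cosF d a * cosF d b = (2⁻¹ : ℝ) • (cosF d (a - b) + cosF d (a + b)) := by
  ext x
  simp only [ContinuousMap.mul_apply, ContinuousMap.smul_apply, ContinuousMap.add_apply, cosF,
    ContinuousMap.coe_mk, inner_sub_left, inner_add_left, smul_eq_mul]
  rw [Real.cos_sub, Real.cos_add]
  ring

lemma sinsin (a b : EuclideanSpace ℝ (Fin d)) :
    sinF d a * sinF d b = (2⁻¹ : ℝ) • (cosF d (a - b) - cosF d (a + b)) := by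
  ext x
  simp only [ContinuousMap.mul_apply, ContinuousMap.smul_apply, ContinuousMap.sub_apply, cosF,
    sinF, ContinuousMap.coe_mk, inner_sub_left, inner_add_left, smul_eq_mul]
  rw [Real.cos_sub, Real.cos_add]
  ring

lemma sincos (a b : EuclideanSpace ℝ (Fin d)) :
    sinF d a * cosF d b = (2⁻¹ : ℝ) • (sinF d (a + b) + sinF d (a - b)) := by
  ext x
  simp only [ContinuousMap.mul_apply, ContinuousMap.smul_apply, ContinuousMap.add_apply, cosF,
    sinF, ContinuousMap.coe_mk, inner_sub_left, inner_add_left, smul_eq_mul]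
  rw [Real.sin_add, Real.sin_sub]
  ring

lemma cossin (a b : EuclideanSpace ℝ (Fin d)) :
    cosF d a * sinF d b = (2⁻¹ : ℝ) • (sinF d (a + b) - sinF d (a - b)) := by
  ext x
  simp only [ContinuousMap.mul_apply, ContinuousMap.smul_apply, ContinuousMap.sub_apply, cosF,
    sinF, ContinuousMap.coe_mk, inner_sub_left, inner_add_left, smul_eq_mul]
  rw [Real.sin_add, Real.sin_sub]
  ring

lemma mul_mem_trigMod : ∀ x y : C(Metric.closedBall (0 : EuclideanSpace ℝ (Fin d)) 1, ℝ),
    x ∈ trigMod d → y ∈ trigMod d → x * y ∈ trigMod d := by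
  have hgen : ∀ u ∈ trigSet d, ∀ v ∈ trigSet d, u * v ∈ trigMod d := by
    rintro u (⟨a, rfl⟩ | ⟨a, rfl⟩) v (⟨b, rfl⟩ | ⟨b, rfl⟩)
    · rw [coscos]
      exact Submodule.smul_mem _ _ (add_mem
        (Submodule.subset_span (Or.inl ⟨a - b, rfl⟩))
        (Submodule.subset_span (Or.inl ⟨a + b, rfl⟩)))
    · rw [cossin]
      exact Submodule.smul_mem _ _ (sub_mem
        (Submodule.subset_span (Or.inr ⟨a + b, rfl⟩))
        (Submodule.subset_span (Or.inr ⟨a - b, rfl⟩)))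
    · rw [sincos]
      exact Submodule.smul_mem _ _ (add_mem
        (Submodule.subset_span (Or.inr ⟨a + b, rfl⟩))
        (Submodule.subset_span (Or.inr ⟨a - b, rfl⟩)))
    · rw [sinsin]
      exact Submodule.smul_mem _ _ (sub_mem
        (Submodule.subset_span (Or.inl ⟨a - b, rfl⟩))
        (Submodule.subset_span (Or.inl ⟨a + b, rfl⟩)))
  have key : ∀ u ∈ trigSet d, ∀ v, v ∈ trigMod d → u * v ∈ trigMod d := by
    intro u hu v hv
    induction hv using Submodule.span_induction with
    | mem w hw => exact hgen u hu w hw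
    | zero => simpa using (trigMod d).zero_mem
    | add x y hx hy ihx ihy => rw [mul_add]; exact add_mem ihx ihy
    | smul r x hx ih => rw [mul_smul_comm]; exact Submodule.smul_mem _ r ih
  intro x y hx hy
  induction hx using Submodule.span_induction with
  | mem u hu => exact key u hu y hy
  | zero => simpa using (trigMod d).zero_mem
  | add w z hw hz ihw ihz => rw [add_mul]; exact add_mem ihw ihz
  | smul r w hw ih => rw [smul_mul_assoc]; exact Submodule.smul_mem _ r ih

noncomputable def trigAlg : Subalgebra ℝ C(Metric.closedBall (0 : EuclideanSpace ℝ (Fin d)) 1, ℝ) :=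
  (trigMod d).toSubalgebra (one_mem_trigMod d) (mul_mem_trigMod d)

lemma trig_sep : (trigAlg d).SeparatesPoints := by
  intro x y hxy
  set z := (x : EuclideanSpace ℝ (Fin d)) - (y : EuclideanSpace ℝ (Fin d)) with hzdef
  have hz : z ≠ 0 := sub_ne_zero.2 (fun h => hxy (Subtype.coe_injective h))
  have hn : 0 < ‖z‖ := norm_pos_iff.2 hz
  set a := (π / (4 * ‖z‖)) • z with hadef
  have hra : 0 < π / (4 * ‖z‖) := div_pos Real.pi_pos (by linarith)
  have hna : ‖a‖ = π / 4 := by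
    rw [hadef, norm_smul, Real.norm_eq_abs, abs_of_pos hra]
    field_simp
  have hbound : ∀ w : Metric.closedBall (0 : EuclideanSpace ℝ (Fin d)) 1,
      |⟪a, (w : EuclideanSpace ℝ (Fin d))⟫| ≤ π / 4 := by
    intro w
    have h1 : ‖(w : EuclideanSpace ℝ (Fin d))‖ ≤ 1 := by
      have := w.2
      rwa [Metric.mem_closedBall, dist_zero_right] at this
    calc |⟪a, (w : EuclideanSpace ℝ (Fin d))⟫| ≤ ‖a‖ * ‖(w : EuclideanSpace ℝ (Fin d))‖ :=
          abs_real_inner_le_norm _ _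
      _ ≤ ‖a‖ * 1 := by
          apply mul_le_mul_of_nonneg_left h1 (norm_nonneg _)
      _ = π / 4 := by rw [mul_one, hna]
  have hdiff : ⟪a, (x : EuclideanSpace ℝ (Fin d))⟫ - ⟪a, (y : EuclideanSpace ℝ (Fin d))⟫
      = (π / (4 * ‖z‖)) * ‖z‖ ^ 2 := by
    rw [← inner_sub_right, ← hzdef, hadef, real_inner_smul_left, real_inner_self_eq_norm_sq]
  have hpos : 0 < (π / (4 * ‖z‖)) * ‖z‖ ^ 2 := by positivity
  have hmemIcc : ∀ w : Metric.closedBall (0 : EuclideanSpace ℝ (Fin d)) 1,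
      ⟪a, (w : EuclideanSpace ℝ (Fin d))⟫ ∈ Icc (-(π/2)) (π/2) := by
    intro w
    have := abs_le.1 (hbound w)
    constructor <;> [linarith [Real.pi_pos]; linarith [Real.pi_pos]]
  refine ⟨_, ⟨sinF d a, Submodule.subset_span (Or.inr ⟨a, rfl⟩), rfl⟩, ?_⟩
  show Real.sin ⟪a, (x : EuclideanSpace ℝ (Fin d))⟫ ≠ Real.sin ⟪a, (y : EuclideanSpace ℝ (Fin d))⟫
  apply ne_of_gt
  exact Real.strictMonoOn_sin (hmemIcc y) (hmemIcc x) (by linarith)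

end Trig

lemma trigAlg_toSubmodule (d : ℕ) :
    ∀ f, f ∈ trigAlg d ↔ f ∈ trigMod d :=
  fun _ => Submodule.mem_toSubalgebra

lemma cm_integrable {X : Type*} [TopologicalSpace X] [CompactSpace X] [MeasurableSpace X]
    [OpensMeasurableSpace X] (R : Measure X) [IsFiniteMeasure R] (f : C(X, ℝ)) :
    Integrable f R := by
  apply Integrable.mono' (integrable_const ‖f‖) f.continuous.aestronglyMeasurable
  filter_upwards with k
  exact f.norm_coe_le_norm k

lemma measure_ext_of_trig {d : ℕ} (P' Q' : Measure (Metric.closedBall (0 : EuclideanSpace ℝ (Fin d)) 1))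
    [IsProbabilityMeasure P'] [IsProbabilityMeasure Q']
    (h : ∀ f, f ∈ trigMod d → ∫ k, f k ∂P' = ∫ k, f k ∂Q') : P' = Q' := by
  have hcont : ∀ f : C(Metric.closedBall (0 : EuclideanSpace ℝ (Fin d)) 1, ℝ),
      ∫ k, f k ∂P' = ∫ k, f k ∂Q' := by
    intro f
    have key : ∀ ε : ℝ, 0 < ε → |(∫ k, f k ∂P') - ∫ k, f k ∂Q'| ≤ 2 * ε := by
      intro ε hε
      obtain ⟨⟨g, hg⟩, hgf⟩ :=
        ContinuousMap.exists_mem_subalgebra_near_continuousMap_of_separatesPoints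
          (trigAlg d) (trig_sep d) f ε hε
      have hgmem : g ∈ trigMod d := (trigAlg_toSubmodule d g).1 hg
      have hge := h g hgmem
      have hbnd : ∀ (R : Measure (Metric.closedBall (0 : EuclideanSpace ℝ (Fin d)) 1))
          (_ : IsProbabilityMeasure R), |(∫ k, g k ∂ R) - ∫ k, f k ∂ R| ≤ ε := by
        intro R hR
        rw [← integral_sub (cm_integrable R g) (cm_integrable R f)]
        have := norm_integral_le_of_norm_le_const (μ := R) (C := ε)
          (f := fun k => g k - f k) ?_
        · rwa [probReal_univ, mul_one, Real.norm_eq_abs] at this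
        · filter_upwards with k
          calc ‖g k - f k‖ = ‖(g - f) k‖ := by simp
            _ ≤ ‖g - f‖ := (g - f).norm_coe_le_norm k
            _ ≤ ε := le_of_lt hgf
      have h1 := hbnd P' inferInstance
      have h2 := hbnd Q' inferInstance
      have h3 : |(∫ k, f k ∂P') - ∫ k, f k ∂Q'|
          ≤ |(∫ k, g k ∂Q') - ∫ k, f k ∂P'| + |(∫ k, g k ∂Q') - ∫ k, f k ∂Q'| := by
        calc |(∫ k, f k ∂P') - ∫ k, f k ∂Q'|
            = |((∫ k, g k ∂Q') - ∫ k, f k ∂Q') - ((∫ k, g k ∂Q') - ∫ k, f k ∂P')| := by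
              congr 1; ring
          _ ≤ |(∫ k, g k ∂Q') - ∫ k, f k ∂Q'| + |(∫ k, g k ∂Q') - ∫ k, f k ∂P'| :=
              abs_sub _ _
          _ = |(∫ k, g k ∂Q') - ∫ k, f k ∂P'| + |(∫ k, g k ∂Q') - ∫ k, f k ∂Q'| := by ring
      have h1' : |(∫ k, g k ∂Q') - ∫ k, f k ∂P'| ≤ ε := by rw [← hge]; exact h1
      linarith
    by_contra hne
    have hpos : 0 < |(∫ k, f k ∂P') - ∫ k, f k ∂Q'| := abs_pos.2 (sub_ne_zero.2 hne)
    linarith [key (|(∫ k, f k ∂P') - ∫ k, f k ∂Q'| / 4) (by linarith)]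
  apply ext_of_forall_lintegral_eq_of_IsFiniteMeasure
  intro f
  have hiP : Integrable (fun k => (f k : ℝ)) P' :=
    cm_integrable P' ⟨fun k => (f k : ℝ), NNReal.continuous_coe.comp f.continuous⟩
  have hiQ : Integrable (fun k => (f k : ℝ)) Q' :=
    cm_integrable Q' ⟨fun k => (f k : ℝ), NNReal.continuous_coe.comp f.continuous⟩
  rw [lintegral_coe_eq_integral f hiP, lintegral_coe_eq_integral f hiQ]
  congr 1
  exact hcont ⟨fun k => (f k : ℝ), NNReal.continuous_coe.comp f.continuous⟩

theorem stmt_3 (d : ℕ) (P Q : Measure (EuclideanSpace ℝ (Fin d)))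
    [IsProbabilityMeasure P] [IsProbabilityMeasure Q]
    (hP : P (Metric.closedBall 0 1)ᶜ = 0) (hQ : Q (Metric.closedBall 0 1)ᶜ = 0) :
    (⨆ p : Metric.sphere (0 : EuclideanSpace ℝ (Fin d)) 1 × Set.Icc (-1 : ℝ) 1,
        |(∫ x, max (⟪(p.1 : EuclideanSpace ℝ (Fin d)), x⟫ + (p.2 : ℝ)) 0 ∂P) -
          ∫ x, max (⟪(p.1 : EuclideanSpace ℝ (Fin d)), x⟫ + (p.2 : ℝ)) 0 ∂Q|) = 0
      ↔ P = Q := by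
  have hPae : ∀ᵐ x ∂P, ‖x‖ ≤ 1 := by
    rw [ae_iff]
    convert hP using 2
    ext x
    simp [Metric.mem_closedBall, dist_zero_right]
  have hQae : ∀ᵐ x ∂Q, ‖x‖ ≤ 1 := by
    rw [ae_iff]
    convert hQ using 2
    ext x
    simp [Metric.mem_closedBall, dist_zero_right]
  constructor
  · intro h0
    -- Step 1: each ReLU integral agrees
    have hbd : ∀ (R : Measure (EuclideanSpace ℝ (Fin d))), IsProbabilityMeasure R →
        (∀ᵐ x ∂ R, ‖x‖ ≤ 1) → ∀ (c : EuclideanSpace ℝ (Fin d)), ‖c‖ = 1 → ∀ μ : ℝ, |μ| ≤ 1 →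
        |∫ x, max (⟪c, x⟫ + μ) 0 ∂ R| ≤ 2 := by
      intro R hR hRae c hc μ hμ
      have := norm_integral_le_of_norm_le_const (μ := R) (C := 2)
        (f := fun x => max (⟪c, x⟫ + μ) 0) ?_
      · rwa [probReal_univ, mul_one, Real.norm_eq_abs] at this
      · filter_upwards [hRae] with x hx
        have hi : |⟪c, x⟫| ≤ 1 := by
          have := abs_real_inner_le_norm c x
          rw [hc, one_mul] at this
          exact this.trans hx
        rw [Real.norm_eq_abs, abs_le]
        constructor
        · linarith [le_max_right (⟪c, x⟫ + μ) 0]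
        · exact max_le (by linarith [(abs_le.1 hi).2, (abs_le.1 hμ).2]) (by norm_num)
    have hrelu : ∀ c : EuclideanSpace ℝ (Fin d), ‖c‖ = 1 → ∀ μ ∈ Icc (-1:ℝ) 1,
        ∫ x, max (⟪c, x⟫ + μ) 0 ∂P = ∫ x, max (⟪c, x⟫ + μ) 0 ∂Q := by
      intro c hc μ hμ
      have hbdd : BddAbove (Set.range fun p :
          Metric.sphere (0 : EuclideanSpace ℝ (Fin d)) 1 × Set.Icc (-1:ℝ) 1 =>
          |(∫ x, max (⟪(p.1 : EuclideanSpace ℝ (Fin d)), x⟫ + (p.2 : ℝ)) 0 ∂P) -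
            ∫ x, max (⟪(p.1 : EuclideanSpace ℝ (Fin d)), x⟫ + (p.2 : ℝ)) 0 ∂Q|) := by
        refine ⟨4, ?_⟩
        rintro w ⟨p, rfl⟩
        have hcm : ‖(p.1 : EuclideanSpace ℝ (Fin d))‖ = 1 :=
          mem_sphere_zero_iff_norm.1 p.1.2
        have hμm : |(p.2 : ℝ)| ≤ 1 := abs_le.2 ⟨p.2.2.1, p.2.2.2⟩
        have h1 := hbd P inferInstance hPae _ hcm _ hμm
        have h2 := hbd Q inferInstance hQae _ hcm _ hμm
        dsimp only
        rw [sub_eq_add_neg]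
        refine le_trans (abs_add_le _ _) ?_
        rw [abs_neg]
        linarith
      have hle := le_ciSup hbdd
        (⟨⟨c, mem_sphere_zero_iff_norm.2 hc⟩, ⟨μ, hμ⟩⟩ :
          Metric.sphere (0 : EuclideanSpace ℝ (Fin d)) 1 × Set.Icc (-1:ℝ) 1)
      rw [h0] at hle
      have h2 : |(∫ x, max (⟪c, x⟫ + μ) 0 ∂P) - ∫ x, max (⟪c, x⟫ + μ) 0 ∂Q| = 0 :=
        le_antisymm hle (abs_nonneg _)
      exact sub_eq_zero.1 (abs_eq_zero.1 h2)
    have htrig := trig_eq P Q hPae hQae hrelu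
    -- Step 2: pass to the compact ball
    have hKm : MeasurableSet (Metric.closedBall (0 : EuclideanSpace ℝ (Fin d)) 1) :=
      measurableSet_closedBall
    have hPmap : (P.comap Subtype.val).map
        (Subtype.val : Metric.closedBall (0 : EuclideanSpace ℝ (Fin d)) 1 → _) = P := by
      rw [map_comap_subtype_coe hKm]
      apply Measure.restrict_eq_self_of_ae_mem
      filter_upwards [hPae] with x hx
      rwa [Metric.mem_closedBall, dist_zero_right]
    have hQmap : (Q.comap Subtype.val).map
        (Subtype.val : Metric.closedBall (0 : EuclideanSpace ℝ (Fin d)) 1 → _) = Q := by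
      rw [map_comap_subtype_coe hKm]
      apply Measure.restrict_eq_self_of_ae_mem
      filter_upwards [hQae] with x hx
      rwa [Metric.mem_closedBall, dist_zero_right]
    haveI hP'p : IsProbabilityMeasure (P.comap (Subtype.val :
        Metric.closedBall (0 : EuclideanSpace ℝ (Fin d)) 1 → _)) := by
      constructor
      have h1 : (P.comap Subtype.val).map
          (Subtype.val : Metric.closedBall (0 : EuclideanSpace ℝ (Fin d)) 1 → _) univ
          = P univ := by rw [hPmap]
      rw [Measure.map_apply measurable_subtype_coe MeasurableSet.univ] at h1
      simpa using h1
    haveI hQ'p : IsProbabilityMeasure (Q.comap (Subtype.val :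
        Metric.closedBall (0 : EuclideanSpace ℝ (Fin d)) 1 → _)) := by
      constructor
      have h1 : (Q.comap Subtype.val).map
          (Subtype.val : Metric.closedBall (0 : EuclideanSpace ℝ (Fin d)) 1 → _) univ
          = Q univ := by rw [hQmap]
      rw [Measure.map_apply measurable_subtype_coe MeasurableSet.univ] at h1
      simpa using h1
    -- transfer of integrals
    have htransP : ∀ F : EuclideanSpace ℝ (Fin d) → ℝ, Continuous F →
        ∫ k : Metric.closedBall (0 : EuclideanSpace ℝ (Fin d)) 1,
          F k.val ∂(P.comap Subtype.val) = ∫ x, F x ∂P := by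
      intro F hF
      conv_rhs => rw [← hPmap]
      rw [integral_map measurable_subtype_coe.aemeasurable hF.aestronglyMeasurable]
    have htransQ : ∀ F : EuclideanSpace ℝ (Fin d) → ℝ, Continuous F →
        ∫ k : Metric.closedBall (0 : EuclideanSpace ℝ (Fin d)) 1,
          F k.val ∂(Q.comap Subtype.val) = ∫ x, F x ∂Q := by
      intro F hF
      conv_rhs => rw [← hQmap]
      rw [integral_map measurable_subtype_coe.aemeasurable hF.aestronglyMeasurable]
    -- span equalities
    have hspan : ∀ f, f ∈ trigMod d →
        ∫ k, f k ∂(P.comap Subtype.val) = ∫ k, f k ∂(Q.comap Subtype.val) := by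
      intro f hf
      induction hf using Submodule.span_induction with
      | mem u hu =>
        rcases hu with ⟨a, rfl⟩ | ⟨a, rfl⟩
        · have hc : Continuous fun x : EuclideanSpace ℝ (Fin d) => Real.cos ⟪a, x⟫ :=
            Real.continuous_cos.comp (Continuous.inner continuous_const continuous_id)
          calc ∫ k, (cosF d a) k ∂(P.comap Subtype.val)
              = ∫ x, Real.cos ⟪a, x⟫ ∂P := htransP _ hc
            _ = ∫ x, Real.cos ⟪a, x⟫ ∂Q := (htrig a).1
            _ = ∫ k, (cosF d a) k ∂(Q.comap Subtype.val) := (htransQ _ hc).symm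
        · have hc : Continuous fun x : EuclideanSpace ℝ (Fin d) => Real.sin ⟪a, x⟫ :=
            Real.continuous_sin.comp (Continuous.inner continuous_const continuous_id)
          calc ∫ k, (sinF d a) k ∂(P.comap Subtype.val)
              = ∫ x, Real.sin ⟪a, x⟫ ∂P := htransP _ hc
            _ = ∫ x, Real.sin ⟪a, x⟫ ∂Q := (htrig a).2
            _ = ∫ k, (sinF d a) k ∂(Q.comap Subtype.val) := (htransQ _ hc).symm
      | zero => simp
      | add x y hx hy ihx ihy =>
        have e1 : ∀ (R : Measure (Metric.closedBall (0 : EuclideanSpace ℝ (Fin d)) 1)),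
            IsProbabilityMeasure R →
            ∫ k, (x + y) k ∂ R = (∫ k, x k ∂ R) + ∫ k, y k ∂ R := by
          intro R hR
          simp only [ContinuousMap.add_apply]
          exact integral_add (cm_integrable R x) (cm_integrable R y)
        rw [e1 _ hP'p, e1 _ hQ'p, ihx, ihy]
      | smul r x hx ih =>
        have e1 : ∀ (R : Measure (Metric.closedBall (0 : EuclideanSpace ℝ (Fin d)) 1)),
            ∫ k, (r • x) k ∂ R = r • ∫ k, x k ∂ R := by
          intro R
          simp only [ContinuousMap.smul_apply]
          exact integral_smul r _
        rw [e1, e1, ih]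
    have hPQ' := measure_ext_of_trig (P.comap Subtype.val) (Q.comap Subtype.val) hspan
    rw [← hPmap, ← hQmap, hPQ']
  · rintro rfl
    simp only [sub_self, abs_zero]
    exact Real.iSup_const_zero
end
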